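/- For every d ∈ (0,1), the WENO-M mapping function admits the identity g(ω) = d + (ω−d)³/(d² + (1−2d)ω) near ω = d, and consequently its first and second derivatives vanish at ω = d, g′(d) = g″(d) = 0, while its third derivative satisfies g‴(d) = 6/(d(1−d)) ≠ 0; i.e., ω = d is a critical point of order exactly n = 2. -/

import Mathlib

/-- The WENO-M mapping function of Henrick et al. -/
noncomputable def gM (d ω : ℝ) : ℝ :=
  ω * (d + d ^ 2 - 3 * d * ω + ω ^ 2) / (d ^ 2 + (1 - 2 * d) * ω)

noncomputable def wH (d : ℝ) : ℝ → ℝ := fun ω =>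
  d + (ω - d) ^ 3 / (d ^ 2 + (1 - 2 * d) * ω)

noncomputable def wH1 (d : ℝ) : ℝ → ℝ := fun ω =>
  3 * (ω - d) ^ 2 / (d ^ 2 + (1 - 2 * d) * ω)
    - (1 - 2 * d) * (ω - d) ^ 3 / (d ^ 2 + (1 - 2 * d) * ω) ^ 2

noncomputable def wH2 (d : ℝ) : ℝ → ℝ := fun ω =>
  6 * (ω - d) / (d ^ 2 + (1 - 2 * d) * ω)
    - 6 * (1 - 2 * d) * (ω - d) ^ 2 / (d ^ 2 + (1 - 2 * d) * ω) ^ 2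
    + 2 * (1 - 2 * d) ^ 2 * (ω - d) ^ 3 / (d ^ 2 + (1 - 2 * d) * ω) ^ 3

noncomputable def wH3 (d : ℝ) : ℝ → ℝ := fun ω =>
  6 / (d ^ 2 + (1 - 2 * d) * ω)
    - 18 * (1 - 2 * d) * (ω - d) / (d ^ 2 + (1 - 2 * d) * ω) ^ 2
    + 18 * (1 - 2 * d) ^ 2 * (ω - d) ^ 2 / (d ^ 2 + (1 - 2 * d) * ω) ^ 3
    - 6 * (1 - 2 * d) ^ 3 * (ω - d) ^ 3 / (d ^ 2 + (1 - 2 * d) * ω) ^ 4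

lemma hasDerivAt_D (d ω : ℝ) :
    HasDerivAt (fun x : ℝ => d ^ 2 + (1 - 2 * d) * x) (1 - 2 * d) ω := by
  simpa using ((hasDerivAt_id ω).const_mul (1 - 2 * d)).const_add (d ^ 2)

lemma hasDerivAt_wH (d ω : ℝ) (hω : d ^ 2 + (1 - 2 * d) * ω ≠ 0) :
    HasDerivAt (wH d) (wH1 d ω) ω := by
  unfold wH wH1
  have hN : HasDerivAt (fun x : ℝ => (x - d) ^ 3) (3 * (ω - d) ^ 2) ω := by
    have := ((hasDerivAt_id ω).sub_const d).pow 3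
    refine this.congr_deriv ?_; push_cast; (try simp only [id_eq]); (try push_cast); (try ring)
  have := (hN.div (hasDerivAt_D d ω) hω).const_add d
  refine this.congr_deriv ?_
  field_simp

lemma hasDerivAt_wH1 (d ω : ℝ) (hω : d ^ 2 + (1 - 2 * d) * ω ≠ 0) :
    HasDerivAt (wH1 d) (wH2 d ω) ω := by
  unfold wH1 wH2
  have hN1 : HasDerivAt (fun x : ℝ => 3 * (x - d) ^ 2) (6 * (ω - d)) ω := by
    have := (((hasDerivAt_id ω).sub_const d).pow 2).const_mul 3
    refine this.congr_deriv ?_; push_cast; (try simp only [id_eq]); (try push_cast); (try ring)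
  have hN2 : HasDerivAt (fun x : ℝ => (1 - 2 * d) * (x - d) ^ 3)
      ((1 - 2 * d) * (3 * (ω - d) ^ 2)) ω := by
    have := (((hasDerivAt_id ω).sub_const d).pow 3).const_mul (1 - 2 * d)
    refine this.congr_deriv ?_; push_cast; (try simp only [id_eq]); (try push_cast); (try ring)
  have hD2 : HasDerivAt (fun x : ℝ => (d ^ 2 + (1 - 2 * d) * x) ^ 2)
      (2 * (d ^ 2 + (1 - 2 * d) * ω) * (1 - 2 * d)) ω := by
    have := (hasDerivAt_D d ω).pow 2
    refine this.congr_deriv ?_; push_cast; (try simp only [id_eq]); (try push_cast); (try ring)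
  have := (hN1.div (hasDerivAt_D d ω) hω).sub (hN2.div hD2 (pow_ne_zero 2 hω))
  refine this.congr_deriv ?_
  field_simp
  ring

lemma hasDerivAt_wH2 (d ω : ℝ) (hω : d ^ 2 + (1 - 2 * d) * ω ≠ 0) :
    HasDerivAt (wH2 d) (wH3 d ω) ω := by
  unfold wH2 wH3
  have hN1 : HasDerivAt (fun x : ℝ => 6 * (x - d)) (6 : ℝ) ω := by
    have := ((hasDerivAt_id ω).sub_const d).const_mul 6
    refine this.congr_deriv ?_; (try simp only [id_eq]); (try ring)
  have hN2 : HasDerivAt (fun x : ℝ => 6 * (1 - 2 * d) * (x - d) ^ 2)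
      (6 * (1 - 2 * d) * (2 * (ω - d))) ω := by
    have := (((hasDerivAt_id ω).sub_const d).pow 2).const_mul (6 * (1 - 2 * d))
    refine this.congr_deriv ?_; push_cast; (try simp only [id_eq]); (try push_cast); (try ring)
  have hN3 : HasDerivAt (fun x : ℝ => 2 * (1 - 2 * d) ^ 2 * (x - d) ^ 3)
      (2 * (1 - 2 * d) ^ 2 * (3 * (ω - d) ^ 2)) ω := by
    have := (((hasDerivAt_id ω).sub_const d).pow 3).const_mul (2 * (1 - 2 * d) ^ 2)
    refine this.congr_deriv ?_; push_cast; (try simp only [id_eq]); (try push_cast); (try ring)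
  have hD2 : HasDerivAt (fun x : ℝ => (d ^ 2 + (1 - 2 * d) * x) ^ 2)
      (2 * (d ^ 2 + (1 - 2 * d) * ω) * (1 - 2 * d)) ω := by
    have := (hasDerivAt_D d ω).pow 2
    refine this.congr_deriv ?_; push_cast; (try simp only [id_eq]); (try push_cast); (try ring)
  have hD3 : HasDerivAt (fun x : ℝ => (d ^ 2 + (1 - 2 * d) * x) ^ 3)
      (3 * (d ^ 2 + (1 - 2 * d) * ω) ^ 2 * (1 - 2 * d)) ω := by
    have := (hasDerivAt_D d ω).pow 3
    refine this.congr_deriv ?_; (try push_cast); (try simp only [id_eq]); (try push_cast); (try ring)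
  have := ((hN1.div (hasDerivAt_D d ω) hω).sub
      (hN2.div hD2 (pow_ne_zero 2 hω))).add (hN3.div hD3 (pow_ne_zero 3 hω))
  refine this.congr_deriv ?_
  field_simp
  ring

theorem wenoM_critical_point_order_two (d : ℝ) (hd : d ∈ Set.Ioo (0 : ℝ) 1) :
    (∀ᶠ ω in nhds d, gM d ω = d + (ω - d) ^ 3 / (d ^ 2 + (1 - 2 * d) * ω)) ∧
    iteratedDeriv 1 (gM d) d = 0 ∧
    iteratedDeriv 2 (gM d) d = 0 ∧
    iteratedDeriv 3 (gM d) d = 6 / (d * (1 - d)) ∧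
    (6 : ℝ) / (d * (1 - d)) ≠ 0 := by
  obtain ⟨hd0, hd1⟩ := hd
  have hdd : d * (1 - d) > 0 := mul_pos hd0 (by linarith)
  have hDd0 : d ^ 2 + (1 - 2 * d) * d ≠ 0 := by
    have : d ^ 2 + (1 - 2 * d) * d = d * (1 - d) := by ring
    rw [this]; exact ne_of_gt hdd
  have hU : {ω : ℝ | d ^ 2 + (1 - 2 * d) * ω ≠ 0} ∈ nhds d := by
    have hcont : Continuous fun ω : ℝ => d ^ 2 + (1 - 2 * d) * ω := by continuity
    exact (isOpen_compl_singleton.preimage hcont).mem_nhds hDd0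
  have hgh : gM d =ᶠ[nhds d] wH d := by
    filter_upwards [hU] with ω hω
    unfold gM wH
    rw [add_div' _ _ _ hω]; congr 1; ring
  have e1 : deriv (gM d) =ᶠ[nhds d] wH1 d := by
    refine hgh.deriv.trans ?_
    filter_upwards [hU] with ω hω
    exact (hasDerivAt_wH d ω hω).deriv
  have e2 : deriv (deriv (gM d)) =ᶠ[nhds d] wH2 d := by
    refine e1.deriv.trans ?_
    filter_upwards [hU] with ω hω
    exact (hasDerivAt_wH1 d ω hω).deriv
  have e3 : deriv (deriv (deriv (gM d))) =ᶠ[nhds d] wH3 d := by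
    refine e2.deriv.trans ?_
    filter_upwards [hU] with ω hω
    exact (hasDerivAt_wH2 d ω hω).deriv
  refine ⟨by filter_upwards [hgh] with ω hω; exact hω, ?_, ?_, ?_, ?_⟩
  · rw [iteratedDeriv_one, e1.self_of_nhds]
    unfold wH1; simp
  · rw [show (2 : ℕ) = 1 + 1 from rfl, iteratedDeriv_succ, iteratedDeriv_one,
      e2.self_of_nhds]
    unfold wH2; simp
  · rw [show (3 : ℕ) = 2 + 1 from rfl, iteratedDeriv_succ,
      show (2 : ℕ) = 1 + 1 from rfl, iteratedDeriv_succ, iteratedDeriv_one,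
      e3.self_of_nhds]
    unfold wH3
    rw [show d - d = 0 by ring]
    rw [show d ^ 2 + (1 - 2 * d) * d = d * (1 - d) by ring]
    simp
  · exact div_ne_zero (by norm_num) (ne_of_gt hdd)
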